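/- arXiv:1705.02188 — 2 statements merged into one kernel-verified Lean document; each statement's English description precedes it below -/
import Mathlib

section
/- Let A and B be n×n complex positive definite matrices and let h, h' be reals with 0 < h ≤ h' < 1 such that h·A ≤ B ≤ h'·A in the Loewner order (equivalently h·I ≤ A^{−1/2} B A^{−1/2} ≤ h'·I). Then for every p ∈ [0,1], with r := min{p, 1−p} and R := max{p, 1−p}, one has K(h',2)^r · (A #_p B) ≤ A ∇_p B ≤ K(h,2)^R · (A #_p B) in the Loewner order. -/
open Matrix ComplexOrder

/-- Real power of a (Hermitian) complex matrix via the continuous functional calculus,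
corresponding to `Matrix.PosDef.rpow` on positive definite matrices. -/
noncomputable def mrpow {n : Type*} [Fintype n] [DecidableEq n]
    (A : Matrix n n ℂ) (r : ℝ) : Matrix n n ℂ :=
  cfc (fun t : ℝ => t ^ r) A

/-- The Loewner order: `loe X Y` means `Y - X` is positive semidefinite. -/
def loe {n : Type*} [Fintype n] (X Y : Matrix n n ℂ) : Prop :=
  (Y - X).PosSemidef

/-- `A ♮ᵣ B = A^{1/2} (A^{-1/2} B A^{-1/2})^r A^{1/2}`; for `r ∈ [0,1]` this is the
weighted geometric mean `A #ᵣ B`. -/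
noncomputable def natu {n : Type*} [Fintype n] [DecidableEq n]
    (A B : Matrix n n ℂ) (r : ℝ) : Matrix n n ℂ :=
  mrpow A (1 / 2) * mrpow (mrpow A (-(1 / 2)) * B * mrpow A (-(1 / 2))) r * mrpow A (1 / 2)

/-- The Tsallis relative operator entropy `T_p(A|B) = (A #_p B - A) / p`. -/
noncomputable def TsallisEntropy {n : Type*} [Fintype n] [DecidableEq n]
    (A B : Matrix n n ℂ) (p : ℝ) : Matrix n n ℂ :=
  (1 / p : ℝ) • (natu A B p - A)

section ScalarLemmas

private lemma pow2_rpow {x : ℝ} (hx : 0 ≤ x) (a : ℝ) : ((x ^ (2:ℕ) : ℝ)) ^ a = x ^ (2*a) := by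
  rw [← Real.rpow_natCast x 2, ← Real.rpow_mul hx]
  norm_num

private lemma Keq {t : ℝ} (ht : 0 < t) (a : ℝ) :
    ((t+1) ^ (2:ℕ) / (4*t)) ^ a = ((t+1)/2) ^ (2*a) * t ^ (-a) := by
  have h1 : (t+1) ^ (2:ℕ) / (4*t) = ((t+1)/2) ^ (2:ℕ) * t⁻¹ := by
    field_simp [ht.ne']
    ring
  rw [h1, Real.mul_rpow (by positivity) (by positivity), pow2_rpow (by positivity),
    Real.inv_rpow ht.le, ← Real.rpow_neg ht.le]

private lemma scalar_lower {t : ℝ} (ht : 0 < t) {p : ℝ} (hp0 : 0 ≤ p) (hp1 : p ≤ 1) :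
    ((t+1) ^ (2:ℕ) / (4*t)) ^ (min p (1-p)) * t ^ p ≤ 1 - p + p * t := by
  have ht1 : (0:ℝ) ≤ (t+1)/2 := by positivity
  rcases le_total p (1/2) with hp | hp
  · have hmin : min p (1-p) = p := min_eq_left (by linarith)
    have key : ((t+1) ^ (2:ℕ) / (4*t)) ^ (min p (1-p)) * t ^ p = ((t+1)/2) ^ (2*p) := by
      rw [hmin, Keq ht, mul_assoc, ← Real.rpow_add ht]
      norm_num
    rw [key]
    have := Real.geom_mean_le_arith_mean2_weighted (by linarith : (0:ℝ) ≤ 2*p)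
      (by linarith : (0:ℝ) ≤ 1-2*p) ht1 zero_le_one (by ring)
    rw [Real.one_rpow, mul_one] at this
    linarith
  · have hmin : min p (1-p) = 1-p := min_eq_right (by linarith)
    have key : ((t+1) ^ (2:ℕ) / (4*t)) ^ (min p (1-p)) * t ^ p
        = ((t+1)/2) ^ (2*(1-p)) * t ^ (2*p-1) := by
      rw [hmin, Keq ht, mul_assoc, ← Real.rpow_add ht]
      ring_nf
    rw [key]
    have := Real.geom_mean_le_arith_mean2_weighted (by linarith : (0:ℝ) ≤ 2*(1-p))
      (by linarith : (0:ℝ) ≤ 2*p-1) ht1 ht.le (by ring)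
    linarith

private lemma scalar_upper {t : ℝ} (ht : 0 < t) {p : ℝ} (hp0 : 0 ≤ p) (hp1 : p ≤ 1) :
    1 - p + p * t ≤ ((t+1) ^ (2:ℕ) / (4*t)) ^ (max p (1-p)) * t ^ p := by
  have ht1 : (0:ℝ) ≤ (t+1)/2 := by positivity
  rcases le_total p (1/2) with hp | hp
  · -- max = 1 - p, need X ≤ ((t+1)/2)^(2-2p) * t^(2p-1)
    have hmax : max p (1-p) = 1-p := max_eq_right (by linarith)
    have hX : 0 < 1 - p + p * t := by nlinarith
    have key : ((t+1) ^ (2:ℕ) / (4*t)) ^ (max p (1-p)) * t ^ p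
        = ((t+1)/2) ^ (2*(1-p)) * t ^ (2*p-1) := by
      rw [hmax, Keq ht, mul_assoc, ← Real.rpow_add ht]
      ring_nf
    rw [key]
    set X := 1 - p + p * t with hXdef
    have h2p : (0:ℝ) < 2 - 2*p := by linarith
    have amgm := Real.geom_mean_le_arith_mean2_weighted
      (div_nonneg (by linarith) (by linarith) : (0:ℝ) ≤ (1-2*p)/(2-2*p))
      (div_nonneg (by linarith) (by linarith) : (0:ℝ) ≤ 1/(2-2*p))
      ht.le hX.le (by rw [← add_div, show 1-2*p+1 = 2-2*p by ring, div_self h2p.ne'])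
    have hsum : (1-2*p)/(2-2*p) * t + 1/(2-2*p) * X ≤ (t+1)/2 := by
      rw [hXdef]
      rw [div_mul_eq_mul_div, div_mul_eq_mul_div, ← add_div, div_le_div_iff₀ h2p (by norm_num)]
      ring_nf
      nlinarith
    have h1 : t ^ ((1-2*p)/(2-2*p)) * X ^ (1/(2-2*p)) ≤ (t+1)/2 := le_trans amgm hsum
    have h2 : (t ^ ((1-2*p)/(2-2*p)) * X ^ (1/(2-2*p))) ^ (2-2*p) ≤ ((t+1)/2) ^ (2-2*p) :=
      Real.rpow_le_rpow (by positivity) h1 h2p.le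
    have h3 : (t ^ ((1-2*p)/(2-2*p)) * X ^ (1/(2-2*p))) ^ (2-2*p) = t ^ (1-2*p) * X := by
      rw [Real.mul_rpow (by positivity) (by positivity), ← Real.rpow_mul ht.le,
        ← Real.rpow_mul hX.le, div_mul_cancel₀ _ h2p.ne', div_mul_cancel₀ _ h2p.ne',
        Real.rpow_one]
    rw [h3] at h2
    have h4 := mul_le_mul_of_nonneg_right h2 (Real.rpow_nonneg ht.le (2*p-1))
    calc X = X * (t ^ (1-2*p) * t ^ (2*p-1)) := by
            rw [← Real.rpow_add ht]; norm_num
      _ = t ^ (1-2*p) * X * t ^ (2*p-1) := by ring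
      _ ≤ ((t+1)/2) ^ (2-2*p) * t ^ (2*p-1) := h4
      _ = ((t+1)/2) ^ (2*(1-p)) * t ^ (2*p-1) := by ring_nf
  · -- max = p, need X ≤ ((t+1)/2)^(2p)
    have hmax : max p (1-p) = p := max_eq_left (by linarith)
    have hp' : (0:ℝ) < 2*p := by linarith
    have hX : 0 < 1 - p + p * t := by nlinarith
    have key : ((t+1) ^ (2:ℕ) / (4*t)) ^ (max p (1-p)) * t ^ p = ((t+1)/2) ^ (2*p) := by
      rw [hmax, Keq ht, mul_assoc, ← Real.rpow_add ht]
      norm_num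
    rw [key]
    set X := 1 - p + p * t with hXdef
    have amgm := Real.geom_mean_le_arith_mean2_weighted
      (div_nonneg (by linarith) (by linarith) : (0:ℝ) ≤ 1/(2*p))
      (div_nonneg (by linarith) (by linarith) : (0:ℝ) ≤ (2*p-1)/(2*p))
      hX.le zero_le_one (by rw [← add_div, show 1+(2*p-1) = 2*p by ring, div_self hp'.ne'])
    rw [Real.one_rpow, mul_one, mul_one] at amgm
    have hsum : 1/(2*p) * X + (2*p-1)/(2*p) ≤ (t+1)/2 := by
      rw [hXdef, div_mul_eq_mul_div, ← add_div, div_le_div_iff₀ hp' (by norm_num)]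
      ring_nf
      nlinarith
    have h1 : X ^ (1/(2*p)) ≤ (t+1)/2 := le_trans amgm hsum
    have h2 := Real.rpow_le_rpow (by positivity) h1 hp'.le
    rwa [← Real.rpow_mul hX.le, one_div_mul_cancel hp'.ne', Real.rpow_one] at h2

private lemma K_one_le {t : ℝ} (ht : 0 < t) : 1 ≤ (t+1) ^ (2:ℕ) / (4*t) := by
  rw [le_div_iff₀ (by positivity)]
  nlinarith [sq_nonneg (t-1)]

private lemma K_anti {a b : ℝ} (ha : 0 < a) (hab : a ≤ b) (hb1 : b ≤ 1) :
    (b+1) ^ (2:ℕ) / (4*b) ≤ (a+1) ^ (2:ℕ) / (4*a) := by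
  have hb : 0 < b := lt_of_lt_of_le ha hab
  rw [div_le_div_iff₀ (by positivity) (by positivity)]
  nlinarith [mul_nonneg (sub_nonneg.2 hab) (sub_nonneg.2 (show a*b ≤ 1 by nlinarith))]

end ScalarLemmas

section MatrixHelpers

variable {n : Type*} [Fintype n] [DecidableEq n]

section CfcHelpers

variable {A : Matrix n n ℂ} (hA : A.IsHermitian)

private lemma cfc'_mul (f g : ℝ → ℝ) :
    hA.cfc f * hA.cfc g = hA.cfc (fun x => f x * g x) := by
  have hU : (star (hA.eigenvectorUnitary : Matrix n n ℂ)) * (hA.eigenvectorUnitary : Matrix n n ℂ) = 1 :=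
    Unitary.star_mul_self_of_mem (SetLike.coe_mem _)
  unfold Matrix.IsHermitian.cfc
  simp only [Unitary.conjStarAlgAut_apply]
  have h1 : ∀ (D E : Matrix n n ℂ),
      ((hA.eigenvectorUnitary : Matrix n n ℂ) * D * star (hA.eigenvectorUnitary : Matrix n n ℂ))
      * ((hA.eigenvectorUnitary : Matrix n n ℂ) * E * star (hA.eigenvectorUnitary : Matrix n n ℂ))
      = (hA.eigenvectorUnitary : Matrix n n ℂ) * (D * E) * star (hA.eigenvectorUnitary : Matrix n n ℂ) := by
    intro D E
    calc ((hA.eigenvectorUnitary : Matrix n n ℂ) * D * star (hA.eigenvectorUnitary : Matrix n n ℂ))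
        * ((hA.eigenvectorUnitary : Matrix n n ℂ) * E * star (hA.eigenvectorUnitary : Matrix n n ℂ))
        = (hA.eigenvectorUnitary : Matrix n n ℂ) * (D * ((star (hA.eigenvectorUnitary : Matrix n n ℂ)
            * (hA.eigenvectorUnitary : Matrix n n ℂ)) * E)) * star (hA.eigenvectorUnitary : Matrix n n ℂ) := by
          simp only [mul_assoc]
      _ = _ := by rw [hU, one_mul]
  rw [h1, diagonal_mul_diagonal]
  congr 1
  congr 1
  refine (diagonal_eq_diagonal_iff).mpr fun i => ?_
  simp [Function.comp]

private lemma cfc'_id : hA.cfc id = A := by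
  conv_rhs => rw [hA.spectral_theorem]
  rfl

private lemma cfc'_one : hA.cfc (fun _ => 1) = 1 := by
  unfold Matrix.IsHermitian.cfc
  simp only [Unitary.conjStarAlgAut_apply]
  have h1 : (RCLike.ofReal ∘ (fun _ : ℝ => (1:ℝ)) ∘ hA.eigenvalues : n → ℂ) = fun _ => 1 := by
    funext i; simp
  rw [h1, diagonal_one, mul_one, Unitary.mul_star_self_of_mem (SetLike.coe_mem _)]

private lemma cfc'_add (f g : ℝ → ℝ) :
    hA.cfc f + hA.cfc g = hA.cfc (fun x => f x + g x) := by
  unfold Matrix.IsHermitian.cfc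
  simp only [Unitary.conjStarAlgAut_apply]
  rw [← add_mul, ← mul_add, diagonal_add]
  congr 1
  congr 1
  refine (diagonal_eq_diagonal_iff).mpr fun i => ?_
  simp [Function.comp]

private lemma cfc'_smul (c : ℝ) (f : ℝ → ℝ) :
    c • hA.cfc f = hA.cfc (fun x => c * f x) := by
  unfold Matrix.IsHermitian.cfc
  simp only [Unitary.conjStarAlgAut_apply]
  rw [mul_assoc, ← mul_smul_comm, ← smul_mul_assoc, ← mul_assoc, ← diagonal_smul]
  congr 1
  congr 1
  refine (diagonal_eq_diagonal_iff).mpr fun i => ?_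
  simp [Function.comp, Complex.real_smul]

private lemma cfc'_congr {f g : ℝ → ℝ} (hfg : ∀ i, f (hA.eigenvalues i) = g (hA.eigenvalues i)) :
    hA.cfc f = hA.cfc g := by
  unfold Matrix.IsHermitian.cfc
  simp only [Unitary.conjStarAlgAut_apply]
  congr 1
  congr 1
  refine (diagonal_eq_diagonal_iff).mpr fun i => ?_
  simp [Function.comp, hfg i]

private lemma cfc'_isHermitian (f : ℝ → ℝ) : (hA.cfc f).IsHermitian := by
  unfold Matrix.IsHermitian.cfc
  simp only [Unitary.conjStarAlgAut_apply]
  rw [Matrix.IsHermitian, ← star_eq_conjTranspose, StarMul.star_mul, StarMul.star_mul,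
    star_star, ← mul_assoc]
  congr 1
  congr 1
  rw [star_eq_conjTranspose, diagonal_conjTranspose]
  refine (diagonal_eq_diagonal_iff).mpr fun i => ?_
  simp [Function.comp, Pi.star_def]

private lemma cfc'_posSemidef {f : ℝ → ℝ} (hf : ∀ i, 0 ≤ f (hA.eigenvalues i)) :
    (hA.cfc f).PosSemidef := by
  unfold Matrix.IsHermitian.cfc
  simp only [Unitary.conjStarAlgAut_apply]
  rw [star_eq_conjTranspose]
  refine (Matrix.PosSemidef.diagonal ?_).mul_mul_conjTranspose_same _
  intro i
  simpa [Function.comp] using Complex.zero_le_real.2 (hf i)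

private lemma eig_lb {a : ℝ} (hP : (A - a • 1).PosSemidef) (i : n) :
    a ≤ hA.eigenvalues i := by
  have h0 := hP.re_dotProduct_nonneg ⇑(hA.eigenvectorBasis i)
  have hvv : star ⇑(hA.eigenvectorBasis i) ⬝ᵥ ⇑(hA.eigenvectorBasis i) = 1 := by
    have := EuclideanSpace.inner_eq_star_dotProduct (𝕜 := ℂ) (hA.eigenvectorBasis i) (hA.eigenvectorBasis i)
    rw [dotProduct_comm, ← this, inner_self_eq_norm_sq_to_K, hA.eigenvectorBasis.orthonormal.1 i]
    norm_num
  rw [sub_mulVec, dotProduct_sub, map_sub, smul_mulVec, one_mulVec, dotProduct_smul,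
    hvv] at h0
  rw [← hA.eigenvalues_eq i] at h0
  simp only [smul_eq_mul, mul_one, Complex.real_smul, Complex.ofReal_re,
    RCLike.ofReal_re, RCLike.re_to_complex, Complex.mul_re, Complex.one_re, Complex.one_im] at h0
  linarith

private lemma eig_ub {a : ℝ} (hP : (a • 1 - A).PosSemidef) (i : n) :
    hA.eigenvalues i ≤ a := by
  have h0 := hP.re_dotProduct_nonneg ⇑(hA.eigenvectorBasis i)
  have hvv : star ⇑(hA.eigenvectorBasis i) ⬝ᵥ ⇑(hA.eigenvectorBasis i) = 1 := by
    have := EuclideanSpace.inner_eq_star_dotProduct (𝕜 := ℂ) (hA.eigenvectorBasis i) (hA.eigenvectorBasis i)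
    rw [dotProduct_comm, ← this, inner_self_eq_norm_sq_to_K, hA.eigenvectorBasis.orthonormal.1 i]
    norm_num
  rw [sub_mulVec, dotProduct_sub, map_sub, smul_mulVec, one_mulVec, dotProduct_smul,
    hvv] at h0
  rw [← hA.eigenvalues_eq i] at h0
  simp only [smul_eq_mul, mul_one, Complex.real_smul, Complex.ofReal_re,
    RCLike.ofReal_re, RCLike.re_to_complex, Complex.mul_re, Complex.one_re, Complex.one_im] at h0
  linarith

end CfcHelpers

private lemma cfc'_sub {n : Type*} [Fintype n] [DecidableEq n] {A : Matrix n n ℂ}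
    (hA : A.IsHermitian) (f g : ℝ → ℝ) :
    hA.cfc f - hA.cfc g = hA.cfc (fun x => f x - g x) := by
  unfold Matrix.IsHermitian.cfc
  simp only [Unitary.conjStarAlgAut_apply]
  rw [← sub_mul, ← mul_sub, diagonal_sub]
  congr 1
  congr 1
  refine (diagonal_eq_diagonal_iff).mpr fun i => ?_
  simp [Function.comp]

end MatrixHelpers

theorem stmt13 {n : Type*} [Fintype n] [DecidableEq n] {A B : Matrix n n ℂ}
    (hA : A.PosDef) (hB : B.PosDef) {h h' : ℝ} (hh0 : 0 < h) (hhh' : h ≤ h') (hh'1 : h' < 1)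
    (hlow : loe (h • A) B) (hup : loe B (h' • A))
    {p : ℝ} (hp0 : 0 ≤ p) (hp1 : p ≤ 1) :
    loe ((((h' + 1) ^ (2 : ℕ) / (4 * h')) ^ min p (1 - p)) • natu A B p)
      ((1 - p) • A + p • B) ∧
    loe ((1 - p) • A + p • B)
      ((((h + 1) ^ (2 : ℕ) / (4 * h)) ^ max p (1 - p)) • natu A B p) := by
  have hAH : A.IsHermitian := hA.1
  have heigA : ∀ i, 0 < hAH.eigenvalues i := hA.eigenvalues_pos
  set S : Matrix n n ℂ := hAH.cfc (fun t : ℝ => t ^ ((1:ℝ)/2)) with hSdef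
  set Si : Matrix n n ℂ := hAH.cfc (fun t : ℝ => t ^ (-((1:ℝ)/2))) with hSidef
  have hS : mrpow A (1/2) = S := hAH.cfc_eq _
  have hSi : mrpow A (-(1/2)) = Si := hAH.cfc_eq _
  have hSH : S.IsHermitian := cfc'_isHermitian hAH _
  have hSiH : Si.IsHermitian := cfc'_isHermitian hAH _
  have hSS : S * S = A := by
    rw [hSdef, cfc'_mul, cfc'_congr hAH (g := id)
      (fun i => by rw [← Real.rpow_add (heigA i)]; norm_num), cfc'_id]
  have hSSi : S * Si = 1 := by
    rw [hSdef, hSidef, cfc'_mul, cfc'_congr hAH (g := fun _ => 1)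
      (fun i => by rw [← Real.rpow_add (heigA i)]; norm_num), cfc'_one]
  have hSiS : Si * S = 1 := by
    rw [hSdef, hSidef, cfc'_mul, cfc'_congr hAH (g := fun _ => 1)
      (fun i => by rw [← Real.rpow_add (heigA i)]; norm_num), cfc'_one]
  set C : Matrix n n ℂ := Si * B * Si with hCdef
  have hSiASi : Si * A * Si = 1 := by
    conv_lhs => rw [← hSS]
    calc Si * (S * S) * Si = (Si * S) * (S * Si) := by simp only [mul_assoc]
      _ = 1 := by rw [hSiS, hSSi, one_mul]
  have hCH : C.IsHermitian := by
    have := isHermitian_mul_mul_conjTranspose Si hB.1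
    rwa [hSiH.eq] at this
  have hSCS : S * C * S = B := by
    calc S * (Si * B * Si) * S = (S * Si) * B * (Si * S) := by simp only [mul_assoc]
      _ = B := by rw [hSSi, hSiS, one_mul, mul_one]
  -- eigenvalue bounds for C
  have hCl : (C - h • 1).PosSemidef := by
    have h1 : (B - h • A).PosSemidef := hlow
    have h2 := h1.conjTranspose_mul_mul_same Si
    rw [hSiH.eq] at h2
    have h3 : Si * (B - h • A) * Si = C - h • 1 := by
      rw [Matrix.mul_sub, Matrix.sub_mul, Matrix.mul_smul, Matrix.smul_mul, hSiASi]
    rwa [h3] at h2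
  have hCu : (h' • 1 - C).PosSemidef := by
    have h1 : (h' • A - B).PosSemidef := hup
    have h2 := h1.conjTranspose_mul_mul_same Si
    rw [hSiH.eq] at h2
    have h3 : Si * (h' • A - B) * Si = h' • 1 - C := by
      rw [Matrix.mul_sub, Matrix.sub_mul, Matrix.mul_smul, Matrix.smul_mul, hSiASi]
    rwa [h3] at h2
  have heig_lb : ∀ i, h ≤ hCH.eigenvalues i := eig_lb hCH hCl
  have heig_ub : ∀ i, hCH.eigenvalues i ≤ h' := eig_ub hCH hCu
  have heig_pos : ∀ i, 0 < hCH.eigenvalues i := fun i => lt_of_lt_of_le hh0 (heig_lb i)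
  have hh'0 : 0 < h' := lt_of_lt_of_le hh0 hhh'
  -- natu in cfc form
  have hnatu : natu A B p = S * hCH.cfc (fun t : ℝ => t ^ p) * S := by
    unfold natu
    rw [hSi, hS, ← hCdef, show mrpow C p = hCH.cfc (fun t : ℝ => t ^ p) from hCH.cfc_eq _]
  -- generic conjugation computation
  have hconj : ∀ c₀ c₁ c₂ : ℝ,
      S * hCH.cfc (fun t => c₀ * 1 + c₁ * t - c₂ * t ^ p) * S
        = c₀ • A + c₁ • B - c₂ • (S * hCH.cfc (fun t : ℝ => t ^ p) * S) := by
    intro c₀ c₁ c₂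
    have e1 : (c₀ : ℝ) • (1 : Matrix n n ℂ) = hCH.cfc (fun t => c₀ * 1) := by
      rw [← cfc'_smul, cfc'_one]
    have e2 : (c₁ : ℝ) • C = hCH.cfc (fun t => c₁ * id t) := by
      rw [← cfc'_smul, cfc'_id]
    have e3 : (c₂ : ℝ) • hCH.cfc (fun t : ℝ => t ^ p) = hCH.cfc (fun t => c₂ * t ^ p) :=
      cfc'_smul hCH _ _
    have hsplit : hCH.cfc (fun t => c₀ * 1 + c₁ * t - c₂ * t ^ p)
        = c₀ • (1 : Matrix n n ℂ) + c₁ • C - c₂ • hCH.cfc (fun t : ℝ => t ^ p) := by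
      rw [e1, e2, e3, cfc'_add, cfc'_sub]
      rfl
    rw [hsplit, Matrix.mul_sub, Matrix.sub_mul, Matrix.mul_add, Matrix.add_mul,
      Matrix.mul_smul, Matrix.mul_smul, Matrix.mul_smul, Matrix.smul_mul, Matrix.smul_mul,
      Matrix.smul_mul, mul_one, hSS, hSCS]
  constructor
  · -- lower bound
    set K' : ℝ := ((h' + 1) ^ (2 : ℕ) / (4 * h')) ^ min p (1 - p) with hK'def
    show ((1 - p) • A + p • B - K' • natu A B p).PosSemidef
    have hpos : (hCH.cfc (fun t => (1 - p) * 1 + p * t - K' * t ^ p)).PosSemidef := by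
      refine cfc'_posSemidef hCH fun i => ?_
      set t := hCH.eigenvalues i with htdef
      have ht : 0 < t := heig_pos i
      have hKmono : (h' + 1) ^ (2:ℕ) / (4 * h') ≤ (t + 1) ^ (2:ℕ) / (4 * t) :=
        K_anti ht (heig_ub i) hh'1.le
      have h1 : K' ≤ ((t + 1) ^ (2:ℕ) / (4 * t)) ^ min p (1 - p) :=
        Real.rpow_le_rpow (by positivity) hKmono (le_min hp0 (by linarith))
      have h2 := mul_le_mul_of_nonneg_right h1 (Real.rpow_nonneg ht.le p)
      have h3 := scalar_lower ht hp0 hp1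
      nlinarith [Real.rpow_nonneg ht.le p]
    have hfin : (1 - p) • A + p • B - K' • natu A B p
        = S * hCH.cfc (fun t => (1 - p) * 1 + p * t - K' * t ^ p) * S := by
      rw [hnatu, hconj]
    rw [hfin]
    have := hpos.mul_mul_conjTranspose_same S
    rwa [hSH.eq] at this
  · -- upper bound
    set K : ℝ := ((h + 1) ^ (2 : ℕ) / (4 * h)) ^ max p (1 - p) with hKdef
    show (K • natu A B p - ((1 - p) • A + p • B)).PosSemidef
    have hpos : (hCH.cfc (fun t => K * t ^ p - ((1 - p) * 1 + p * t))).PosSemidef := by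
      refine cfc'_posSemidef hCH fun i => ?_
      set t := hCH.eigenvalues i with htdef
      have ht : 0 < t := heig_pos i
      have hKmono : (t + 1) ^ (2:ℕ) / (4 * t) ≤ (h + 1) ^ (2:ℕ) / (4 * h) :=
        K_anti hh0 (heig_lb i) (le_trans (heig_ub i) hh'1.le)
      have hK1 : (1:ℝ) ≤ (t + 1) ^ (2:ℕ) / (4 * t) := K_one_le ht
      have h1 : ((t + 1) ^ (2:ℕ) / (4 * t)) ^ max p (1 - p) ≤ K :=
        Real.rpow_le_rpow (by positivity) hKmono (le_trans hp0 (le_max_left _ _))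
      have h2 := mul_le_mul_of_nonneg_right h1 (Real.rpow_nonneg ht.le p)
      have h3 := scalar_upper ht hp0 hp1
      nlinarith [Real.rpow_nonneg ht.le p]
    have hfin : K • natu A B p - ((1 - p) • A + p • B)
        = - (S * hCH.cfc (fun t => (1 - p) * 1 + p * t - K * t ^ p) * S) := by
      rw [hnatu, hconj]
      abel
    have hneg : K • natu A B p - ((1 - p) • A + p • B)
        = S * hCH.cfc (fun t => K * t ^ p - ((1 - p) * 1 + p * t)) * S := by
      rw [hfin, ← cfc'_sub, ← cfc'_sub, ← cfc'_add]
      simp only [Matrix.mul_sub, Matrix.sub_mul, Matrix.mul_add, Matrix.add_mul, neg_sub]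
    rw [hneg]
    have := hpos.mul_mul_conjTranspose_same S
    rwa [hSH.eq] at this
end

section
/- Let A and B be n×n complex positive definite matrices, and let Φ be a positive linear map from n×n complex matrices to m×m complex matrices such that Φ(A) and Φ(B) are positive definite. Then for every p ∈ [0,1], with r := min{p, 1−p} and R := max{p, 1−p}, one has 2r·(Φ(A ∇ B) − Φ(A) # Φ(B)) + Φ(A) #_p Φ(B) ≤ Φ(A ∇_p B) ≤ 2R·(Φ(A ∇ B) − Φ(A # B)) + Φ(A #_p B) in the Loewner order. -/
open Matrix ComplexOrder

/-! ### Auxiliary lemmas -/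

section Aux

lemma KM.sq_half {t : ℝ} (ht : 0 < t) : t ^ (1/2:ℝ) * t ^ (1/2:ℝ) = t := by
  rw [← Real.rpow_add ht]; norm_num

lemma KM.scalar_low {p t : ℝ} (hp0 : 0 ≤ p) (hp1 : p ≤ 1) (ht : 0 < t) :
    2 * min p (1-p) * ((1/2) * (1 + t) - t^(1/2:ℝ)) + t^p ≤ (1-p) * 1 + p * t := by
  set s := t ^ (1/2:ℝ) with hs
  have hs0 : 0 ≤ s := Real.rpow_nonneg ht.le _
  have hss : s * s = t := KM.sq_half ht
  rcases le_total p (1/2) with hc | hc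
  · rw [min_eq_left (by linarith)]
    have key : t ^ p ≤ (1 - 2*p) * 1 + (2*p) * s := by
      have h := Real.geom_mean_le_arith_mean2_weighted (by linarith : (0:ℝ) ≤ 1 - 2*p)
        (by linarith : (0:ℝ) ≤ 2*p) zero_le_one hs0 (by ring)
      calc t ^ p = 1 ^ (1-2*p) * s ^ (2*p) := by
            rw [Real.one_rpow, one_mul, hs, ← Real.rpow_mul ht.le]
            ring_nf
        _ ≤ _ := h
    nlinarith [key]
  · rw [min_eq_right (by linarith)]
    have key : t ^ p ≤ (2*p - 1) * t + (2 - 2*p) * s := by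
      have h := Real.geom_mean_le_arith_mean2_weighted (by linarith : (0:ℝ) ≤ 2*p - 1)
        (by linarith : (0:ℝ) ≤ 2 - 2*p) ht.le hs0 (by ring)
      calc t ^ p = t ^ (2*p-1) * s ^ (2-2*p) := by
            rw [hs, ← Real.rpow_mul ht.le, ← Real.rpow_add ht]
            norm_num
            ring_nf
        _ ≤ _ := h
    nlinarith [key]

lemma KM.scalar_high {p t : ℝ} (hp0 : 0 ≤ p) (hp1 : p ≤ 1) (ht : 0 < t) :
    (1-p) * 1 + p * t ≤ 2 * max p (1-p) * ((1/2) * (1 + t) - t^(1/2:ℝ)) + t^p := by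
  set s := t ^ (1/2:ℝ) with hs
  have hs0 : 0 ≤ s := Real.rpow_nonneg ht.le _
  have hss : s * s = t := KM.sq_half ht
  have htp : 0 < t ^ p := Real.rpow_pos_of_pos ht _
  rcases le_total p (1/2) with hc | hc
  · rw [max_eq_right (by linarith)]
    have h1p : (0:ℝ) < 1 - p := by linarith
    have key : s ≤ (1/(2*(1-p))) * t^p + (1 - 1/(2*(1-p))) * t := by
      have h := Real.geom_mean_le_arith_mean2_weighted
        (by positivity : (0:ℝ) ≤ 1/(2*(1-p)))
        (by rw [sub_nonneg, div_le_one (by linarith)]; linarith : (0:ℝ) ≤ 1 - 1/(2*(1-p)))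
        htp.le ht.le (by ring)
      calc s = (t^p) ^ (1/(2*(1-p))) * t ^ (1 - 1/(2*(1-p))) := by
            rw [hs, ← Real.rpow_mul ht.le, ← Real.rpow_add ht]
            congr 1
            field_simp
            ring
        _ ≤ _ := h
    have h2 := mul_le_mul_of_nonneg_left key (by positivity : (0:ℝ) ≤ 2*(1-p))
    have h3 : 2*(1-p) * (1/(2*(1-p)) * t^p + (1 - 1/(2*(1-p))) * t)
        = t^p + (1-2*p)*t := by
      have hα : 2*(1-p) * (1/(2*(1-p))) = 1 := by field_simp
      calc 2*(1-p) * (1/(2*(1-p)) * t^p + (1 - 1/(2*(1-p))) * t)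
          = (2*(1-p) * (1/(2*(1-p)))) * t^p
            + (2*(1-p) - (2*(1-p) * (1/(2*(1-p))))) * t := by ring
        _ = t^p + (1-2*p)*t := by rw [hα]; ring
    have key2 : 2*(1-p)*s ≤ t^p + (1-2*p)*t := le_of_le_of_eq h2 h3
    nlinarith [key2]
  · rw [max_eq_left (by linarith)]
    have hp' : (0:ℝ) < p := by linarith
    have key : s ≤ (1/(2*p)) * t^p + (1 - 1/(2*p)) * 1 := by
      have h := Real.geom_mean_le_arith_mean2_weighted
        (by positivity : (0:ℝ) ≤ 1/(2*p))
        (by rw [sub_nonneg, div_le_one (by linarith)]; linarith : (0:ℝ) ≤ 1 - 1/(2*p))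
        htp.le zero_le_one (by ring)
      calc s = (t^p) ^ (1/(2*p)) * 1 ^ (1 - 1/(2*p)) := by
            rw [Real.one_rpow, mul_one, hs, ← Real.rpow_mul ht.le]
            congr 1
            field_simp
        _ ≤ _ := h
    have h2 := mul_le_mul_of_nonneg_left key (by positivity : (0:ℝ) ≤ 2*p)
    have h3 : 2*p * (1/(2*p) * t^p + (1 - 1/(2*p)) * 1) = t^p + (2*p-1) := by
      have hα : 2*p * (1/(2*p)) = 1 := by field_simp
      calc 2*p * (1/(2*p) * t^p + (1 - 1/(2*p)) * 1)
          = (2*p * (1/(2*p))) * t^p + (2*p - (2*p * (1/(2*p)))) * 1 := by ring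
        _ = t^p + (2*p-1) := by rw [hα]; ring
    have key2 : 2*p*s ≤ t^p + (2*p-1) := le_of_le_of_eq h2 h3
    nlinarith [key2]

variable {n : Type*} [Fintype n] [DecidableEq n]

lemma KM.hcont {M : Matrix n n ℂ} (f : ℝ → ℝ) : ContinuousOn f (spectrum ℝ M) :=
  Set.Finite.continuousOn Matrix.finite_real_spectrum f

lemma KM.specPos {M : Matrix n n ℂ} (hM : M.PosDef) : ∀ x ∈ spectrum ℝ M, 0 < x := by
  intro x hx
  rw [hM.isHermitian.spectrum_real_eq_range_eigenvalues] at hx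
  obtain ⟨i, rfl⟩ := hx
  exact hM.eigenvalues_pos i

lemma KM.cfc_psd {M : Matrix n n ℂ} (hM : M.IsHermitian) {f : ℝ → ℝ}
    (hf : ∀ x ∈ spectrum ℝ M, 0 ≤ f x) : (cfc f M).PosSemidef := by
  rw [hM.cfc_eq]
  unfold Matrix.IsHermitian.cfc
  have h1 : star (hM.eigenvectorUnitary : Matrix n n ℂ)
      = (hM.eigenvectorUnitary : Matrix n n ℂ)ᴴ := rfl
  rw [Unitary.conjStarAlgAut_apply]
  rw [h1]
  refine Matrix.PosSemidef.mul_mul_conjTranspose_same (Matrix.PosSemidef.diagonal ?_) _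
  intro i
  show (0:ℂ) ≤ _
  simp only [Function.comp_apply]
  rw [RCLike.ofReal_nonneg]
  exact hf _ (hM.eigenvalues_mem_spectrum_real i)

lemma KM.posDef_conj' {D M : Matrix n n ℂ} (hD : D.PosDef) (hM : IsUnit M.det) :
    (Mᴴ * D * M).PosDef := by
  refine PosDef.of_dotProduct_mulVec_pos (isHermitian_conjTranspose_mul_mul M hD.1) fun x hx => ?_
  have hx' : M *ᵥ x ≠ 0 := by
    intro h
    exact hx (Matrix.eq_zero_of_mulVec_eq_zero (by simpa using hM.ne_zero) h)
  simpa only [star_mulVec, dotProduct_mulVec, vecMul_vecMul] using hD.dotProduct_mulVec_pos hx'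

lemma KM.posDef_conj {D M : Matrix n n ℂ} (hD : D.PosDef) (hM : IsUnit M.det) :
    (M * D * Mᴴ).PosDef := by
  have hMH : IsUnit (Mᴴ).det := by rw [Matrix.det_conjTranspose]; exact hM.star
  simpa only [conjTranspose_conjTranspose] using KM.posDef_conj' hD hMH

lemma KM.cfc_pd {M : Matrix n n ℂ} (hM : M.PosDef) {f : ℝ → ℝ}
    (hf : ∀ x ∈ spectrum ℝ M, 0 < f x) : (cfc f M).PosDef := by
  have hH := hM.isHermitian
  rw [hH.cfc_eq]
  unfold Matrix.IsHermitian.cfc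
  have h1 : star (hH.eigenvectorUnitary : Matrix n n ℂ)
      = (hH.eigenvectorUnitary : Matrix n n ℂ)ᴴ := rfl
  rw [Unitary.conjStarAlgAut_apply]
  rw [h1]
  have hU : IsUnit (hH.eigenvectorUnitary : Matrix n n ℂ).det := by
    apply IsUnit.of_mul_eq_one (star (hH.eigenvectorUnitary : Matrix n n ℂ)).det
    rw [← Matrix.det_mul, Unitary.mul_star_self_of_mem hH.eigenvectorUnitary.prop]
    exact Matrix.det_one
  refine KM.posDef_conj (Matrix.PosDef.diagonal ?_) hU
  intro i
  simp only [Function.comp_apply]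
  exact RCLike.ofReal_pos.mpr (hf _ (hH.eigenvalues_mem_spectrum_real i))

lemma KM.loe_cfc {M : Matrix n n ℂ} (hM : M.IsHermitian) {f g : ℝ → ℝ}
    (h : ∀ x ∈ spectrum ℝ M, f x ≤ g x) : loe (cfc f M) (cfc g M) := by
  unfold loe
  rw [← cfc_sub g f M (KM.hcont _) (KM.hcont _)]
  exact KM.cfc_psd hM fun x hx => sub_nonneg.mpr (h x hx)

lemma KM.mrpow_pd {A : Matrix n n ℂ} (hA : A.PosDef) (r : ℝ) : (mrpow A r).PosDef :=
  KM.cfc_pd hA fun x hx => Real.rpow_pos_of_pos (KM.specPos hA x hx) r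

lemma KM.mrpow_add {A : Matrix n n ℂ} (hA : A.PosDef) (r s : ℝ) :
    mrpow A r * mrpow A s = mrpow A (r + s) := by
  unfold mrpow
  rw [← cfc_mul _ _ A (KM.hcont _) (KM.hcont _)]
  exact cfc_congr fun x hx => (Real.rpow_add (KM.specPos hA x hx) r s).symm

lemma KM.mrpow_zero {A : Matrix n n ℂ} (hA : A.PosDef) : mrpow A 0 = 1 := by
  have hs : IsSelfAdjoint A := hA.isHermitian
  unfold mrpow
  conv_rhs => rw [← cfc_const_one ℝ A hs]
  exact cfc_congr fun x _ => Real.rpow_zero x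

lemma KM.mrpow_one {A : Matrix n n ℂ} (hA : A.PosDef) : mrpow A 1 = A := by
  have hs : IsSelfAdjoint A := hA.isHermitian
  unfold mrpow
  conv_rhs => rw [← cfc_id' ℝ A hs]
  exact cfc_congr fun x _ => Real.rpow_one x

lemma KM.mrpow_sa {A : Matrix n n ℂ} (r : ℝ) : IsSelfAdjoint (mrpow A r) :=
  cfc_predicate _ _

lemma KM.mrpow_conjTranspose (A : Matrix n n ℂ) (r : ℝ) : (mrpow A r)ᴴ = mrpow A r :=
  (Matrix.star_eq_conjTranspose _).symm.trans (KM.mrpow_sa r).star_eq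

/-- Abstract core of the matrix Kittaneh–Manasrah inequality. -/
lemma KM.core {A B Ah X : Matrix n n ℂ} {p : ℝ} (hp0 : 0 ≤ p) (hp1 : p ≤ 1)
    (hX_pd : X.PosDef) (hAhH : Ahᴴ = Ah)
    (hAhAh : Ah * Ah = A) (hAXA : Ah * X * Ah = B) :
    loe ((2 * min p (1 - p)) • ((1 / 2 : ℝ) • (A + B) - Ah * mrpow X (1/2) * Ah)
          + Ah * mrpow X p * Ah)
        ((1 - p) • A + p • B) ∧
    loe ((1 - p) • A + p • B)
        ((2 * max p (1 - p)) • ((1 / 2 : ℝ) • (A + B) - Ah * mrpow X (1/2) * Ah)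
          + Ah * mrpow X p * Ah) := by
  have hXs : IsSelfAdjoint X := hX_pd.isHermitian
  have repr_mid : cfc (fun t : ℝ => (1-p) * 1 + p * t) X
      = (1-p) • (1:Matrix n n ℂ) + p • X := by
    rw [cfc_add X (fun t => (1-p) * 1) (fun t => p * t) (KM.hcont _) (KM.hcont _),
      cfc_const_mul (1-p : ℝ) (fun _ => (1:ℝ)) X (KM.hcont _),
      cfc_const_mul (p : ℝ) (fun t => t) X (KM.hcont _),
      cfc_const_one ℝ X hXs, cfc_id' ℝ X hXs]
  have repr_comb : ∀ c : ℝ,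
      cfc (fun t : ℝ => c * ((1/2) * (1 + t) - t^(1/2:ℝ)) + t^p) X
        = c • ((1/2:ℝ) • (1 + X) - mrpow X (1/2)) + mrpow X p := by
    intro c
    unfold mrpow
    rw [cfc_add X (fun t => c * ((1/2) * (1 + t) - t^(1/2:ℝ))) (fun t => t^p)
        (KM.hcont _) (KM.hcont _),
      cfc_const_mul c (fun t => (1/2) * (1 + t) - t^(1/2:ℝ)) X (KM.hcont _),
      cfc_sub (fun t => (1/2) * (1 + t)) (fun t => t^(1/2:ℝ)) X (KM.hcont _) (KM.hcont _),
      cfc_const_mul (1/2 : ℝ) (fun t => 1 + t) X (KM.hcont _),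
      cfc_const_add (1:ℝ) (fun t => t) X (KM.hcont _) hXs,
      cfc_id' ℝ X hXs, Algebra.algebraMap_eq_smul_one, one_smul]
  have hconj : ∀ {P Q : Matrix n n ℂ}, loe P Q → loe (Ah * P * Ah) (Ah * Q * Ah) := by
    intro P Q h
    unfold loe at h ⊢
    have he : Ah * Q * Ah - Ah * P * Ah = Ah * (Q - P) * Ahᴴ := by
      rw [hAhH, mul_sub, sub_mul]
    rw [he]
    exact h.mul_mul_conjTranspose_same Ah
  have conj_mid : Ah * ((1-p) • (1:Matrix n n ℂ) + p • X) * Ah = (1 - p) • A + p • B := by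
    rw [mul_add, add_mul, mul_smul_comm, mul_smul_comm, smul_mul_assoc, smul_mul_assoc,
      mul_one, hAhAh, hAXA]
  have conj_comb : ∀ c : ℝ,
      Ah * (c • ((1/2:ℝ) • (1 + X) - mrpow X (1/2)) + mrpow X p) * Ah
        = c • ((1/2:ℝ) • (A + B) - Ah * mrpow X (1/2) * Ah) + Ah * mrpow X p * Ah := by
    intro c
    rw [mul_add, add_mul, mul_smul_comm c, smul_mul_assoc c, mul_sub, sub_mul,
      mul_smul_comm (1/2:ℝ), smul_mul_assoc (1/2:ℝ), mul_add, add_mul, mul_one,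
      hAhAh, hAXA]
  constructor
  · have h1 : loe (cfc (fun t : ℝ => (2 * min p (1-p)) * ((1/2) * (1 + t) - t^(1/2:ℝ)) + t^p) X)
        (cfc (fun t : ℝ => (1-p) * 1 + p * t) X) :=
      KM.loe_cfc hXs fun x hx => KM.scalar_low hp0 hp1 (KM.specPos hX_pd x hx)
    rw [repr_mid, repr_comb] at h1
    have h2 := hconj h1
    rw [conj_mid, conj_comb] at h2
    exact h2
  · have h1 : loe (cfc (fun t : ℝ => (1-p) * 1 + p * t) X)
        (cfc (fun t : ℝ => (2 * max p (1-p)) * ((1/2) * (1 + t) - t^(1/2:ℝ)) + t^p) X) :=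
      KM.loe_cfc hXs fun x hx => KM.scalar_high hp0 hp1 (KM.specPos hX_pd x hx)
    rw [repr_mid, repr_comb] at h1
    have h2 := hconj h1
    rw [conj_mid, conj_comb] at h2
    exact h2

/-- The matrix Kittaneh–Manasrah inequality for two positive definite matrices. -/
lemma KM.matrixKM {A B : Matrix n n ℂ} (hA : A.PosDef) (hB : B.PosDef)
    {p : ℝ} (hp0 : 0 ≤ p) (hp1 : p ≤ 1) :
    loe ((2 * min p (1 - p)) • ((1 / 2 : ℝ) • (A + B) - natu A B (1 / 2)) + natu A B p)
        ((1 - p) • A + p • B) ∧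
    loe ((1 - p) • A + p • B)
        ((2 * max p (1 - p)) • ((1 / 2 : ℝ) • (A + B) - natu A B (1 / 2)) + natu A B p) := by
  have hAiH := KM.mrpow_conjTranspose A (-(1/2))
  have hAi_pd : (mrpow A (-(1/2))).PosDef := KM.mrpow_pd hA _
  have hX_pd : (mrpow A (-(1/2)) * B * mrpow A (-(1/2))).PosDef := by
    nth_rewrite 1 [← hAiH]
    exact KM.posDef_conj' hB (isUnit_iff_ne_zero.mpr hAi_pd.det_pos.ne')
  have hAhAi : mrpow A (1/2) * mrpow A (-(1/2)) = 1 := by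
    rw [KM.mrpow_add hA]
    norm_num
    exact KM.mrpow_zero hA
  have hAiAh : mrpow A (-(1/2)) * mrpow A (1/2) = 1 := by
    rw [KM.mrpow_add hA]
    norm_num
    exact KM.mrpow_zero hA
  have hAhAh : mrpow A (1/2) * mrpow A (1/2) = A := by
    rw [KM.mrpow_add hA]
    norm_num
    exact KM.mrpow_one hA
  have hAXA : mrpow A (1/2) * (mrpow A (-(1/2)) * B * mrpow A (-(1/2))) * mrpow A (1/2) = B := by
    calc mrpow A (1/2) * (mrpow A (-(1/2)) * B * mrpow A (-(1/2))) * mrpow A (1/2)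
        = mrpow A (1/2) * mrpow A (-(1/2)) * (B * (mrpow A (-(1/2)) * mrpow A (1/2))) := by
          simp only [mul_assoc]
      _ = B := by rw [hAhAi, hAiAh, one_mul, mul_one]
  unfold natu
  exact KM.core hp0 hp1 hX_pd (KM.mrpow_conjTranspose A (1/2)) hAhAh hAXA

end Aux

theorem stmt15 {n m : Type*} [Fintype n] [DecidableEq n] [Fintype m] [DecidableEq m]
    {A B : Matrix n n ℂ} (hA : A.PosDef) (hB : B.PosDef)
    (Φ : Matrix n n ℂ →ₗ[ℂ] Matrix m m ℂ)
    (hΦpos : ∀ X : Matrix n n ℂ, X.PosSemidef → (Φ X).PosSemidef)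
    (hΦA : (Φ A).PosDef) (hΦB : (Φ B).PosDef)
    {p : ℝ} (hp0 : 0 ≤ p) (hp1 : p ≤ 1) :
    loe ((2 * min p (1 - p)) • (Φ ((1 / 2 : ℝ) • (A + B)) - natu (Φ A) (Φ B) (1 / 2))
          + natu (Φ A) (Φ B) p)
      (Φ ((1 - p) • A + p • B)) ∧
    loe (Φ ((1 - p) • A + p • B))
      ((2 * max p (1 - p)) • (Φ ((1 / 2 : ℝ) • (A + B)) - Φ (natu A B (1 / 2)))
          + Φ (natu A B p)) := by
  have hΦhalf : Φ ((1 / 2 : ℝ) • (A + B)) = (1 / 2 : ℝ) • (Φ A + Φ B) := by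
    rw [LinearMap.map_smul_of_tower, map_add]
  have hΦmix : Φ ((1 - p) • A + p • B) = (1 - p) • Φ A + p • Φ B := by
    rw [map_add, LinearMap.map_smul_of_tower, LinearMap.map_smul_of_tower]
  constructor
  · rw [hΦhalf, hΦmix]
    exact (KM.matrixKM hΦA hΦB hp0 hp1).1
  · have h1 := (KM.matrixKM hA hB hp0 hp1).2
    have h2 : loe (Φ ((1 - p) • A + p • B))
        (Φ ((2 * max p (1 - p)) • ((1 / 2 : ℝ) • (A + B) - natu A B (1 / 2)) + natu A B p)) := by
      unfold loe at h1 ⊢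
      rw [← map_sub]
      exact hΦpos _ h1
    have h3 : Φ ((2 * max p (1 - p)) • ((1 / 2 : ℝ) • (A + B) - natu A B (1 / 2)) + natu A B p)
        = (2 * max p (1 - p)) • (Φ ((1 / 2 : ℝ) • (A + B)) - Φ (natu A B (1 / 2)))
          + Φ (natu A B p) := by
      rw [map_add, LinearMap.map_smul_of_tower, map_sub]
    rw [h3] at h2
    exact h2
end
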